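/- Let X(t) = exp(tX) and Y(t) = exp(tY) with X = [[1/2,0],[0,-1/2]] and Y = [[0,1/2],[1/2,0]] in sl_2(C). Suppose a, b, a', b' are complex numbers and A, ε > 0 satisfy 2|a|e^{|b|+1} ≤ A, |b−b'| < ε, |a−a'| < ε|a|, and ε < min(1/e, 1/A). Then ‖Y(b)X(a)Y(−b) − Y(b')X(a')Y(−b')‖ ≤ 12·e^{A+|b|}·|a|·ε. -/

import Mathlib

/- STATEMENT 3: With X(t) = exp(tX), Y(t) = exp(tY), X = [[1/2,0],[0,-1/2]],
Y = [[0,1/2],[1/2,0]]: if a, b, a', b' ∈ ℂ and A, ε > 0 satisfy 2|a|e^{|b|+1} ≤ A,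
|b−b'| < ε, |a−a'| < ε|a| and ε < min(1/e, 1/A), then
‖Y(b)X(a)Y(−b) − Y(b')X(a')Y(−b')‖ ≤ 12·e^{A+|b|}·|a|·ε (operator norm). -/

noncomputable section

/-- The (L²) operator norm of a complex 2×2 matrix. -/
def opNorm (M : Matrix (Fin 2) (Fin 2) ℂ) : ℝ :=
  ‖Matrix.toEuclideanCLM (𝕜 := ℂ) M‖

def Xm : Matrix (Fin 2) (Fin 2) ℂ := !![1/2, 0; 0, -1/2]
def Ym : Matrix (Fin 2) (Fin 2) ℂ := !![0, 1/2; 1/2, 0]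

/-- X(t) = exp(tX). -/
def Xt (t : ℂ) : Matrix (Fin 2) (Fin 2) ℂ := NormedSpace.exp (t • Xm)
/-- Y(t) = exp(tY). -/
def Yt (t : ℂ) : Matrix (Fin 2) (Fin 2) ℂ := NormedSpace.exp (t • Ym)

namespace Stmt3Aux

open NormedSpace Nat
open scoped Matrix.Norms.L2Operator Matrix

abbrev Mat := Matrix (Fin 2) (Fin 2) ℂ

lemma norm_one_mat : ‖(1 : Mat)‖ = 1 := by
  rw [Matrix.cstar_norm_def, map_one]; exact norm_one

lemma norm_exp_le (x : Mat) : ‖exp x‖ ≤ Real.exp ‖x‖ := by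
  rw [exp_eq_tsum (𝕂 := ℂ)]
  refine (norm_tsum_le_tsum_norm (norm_expSeries_summable' x)).trans ?_
  rw [Real.exp_eq_exp_ℝ, exp_eq_tsum_div]
  refine Summable.tsum_le_tsum ?_ (norm_expSeries_summable' x) (Real.summable_pow_div_factorial ‖x‖)
  intro n
  rw [norm_smul]
  rcases Nat.eq_zero_or_pos n with h | h
  · simp [h, norm_one_mat]
  · calc ‖((n ! : ℂ))⁻¹‖ * ‖x ^ n‖ ≤ (n ! : ℝ)⁻¹ * ‖x‖ ^ n := by
          gcongr
          · simp
          · exact norm_pow_le' x h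
      _ = ‖x‖ ^ n / n ! := by ring

lemma norm_exp_sub_one_le (x : Mat) : ‖exp x - 1‖ ≤ ‖x‖ * Real.exp ‖x‖ := by
  have hs : Summable (fun n : ℕ => ((n ! : ℂ))⁻¹ • x ^ n) := expSeries_summable' x
  have h0 : exp x - 1 = ∑' n : ℕ, (((n+1)! : ℂ))⁻¹ • x ^ (n+1) := by
    simp only [exp_eq_tsum (𝕂 := ℂ)]
    rw [hs.tsum_eq_zero_add]
    simp
  rw [h0]
  have hbound : ∀ n : ℕ, ‖(((n+1)! : ℂ))⁻¹ • x ^ (n+1)‖ ≤ ‖x‖ * (‖x‖ ^ n / n !) := by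
    intro n
    rw [norm_smul]
    calc ‖(((n+1)! : ℂ))⁻¹‖ * ‖x ^ (n+1)‖ ≤ ((n !) : ℝ)⁻¹ * ‖x‖ ^ (n+1) := by
          gcongr
          · rw [norm_inv]
            simp only [Complex.norm_natCast]
            rw [inv_le_inv₀ (by positivity) (by positivity)]
            exact_mod_cast Nat.factorial_le (Nat.le_succ n)
          · exact norm_pow_le' x (Nat.succ_pos n)
      _ = ‖x‖ * (‖x‖ ^ n / n !) := by rw [pow_succ]; ring
  have hsumm : Summable (fun n : ℕ => ‖(((n+1)! : ℂ))⁻¹ • x ^ (n+1)‖) := by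
    refine Summable.of_nonneg_of_le (fun n => norm_nonneg _) hbound ?_
    exact (Real.summable_pow_div_factorial ‖x‖).mul_left ‖x‖
  refine (norm_tsum_le_tsum_norm hsumm).trans ?_
  calc ∑' n : ℕ, ‖(((n+1)! : ℂ))⁻¹ • x ^ (n+1)‖
      ≤ ∑' n : ℕ, ‖x‖ * (‖x‖ ^ n / n !) :=
        Summable.tsum_le_tsum hbound hsumm ((Real.summable_pow_div_factorial ‖x‖).mul_left ‖x‖)
    _ = ‖x‖ * ∑' n : ℕ, ‖x‖ ^ n / n ! := tsum_mul_left
    _ = ‖x‖ * Real.exp ‖x‖ := by rw [Real.exp_eq_exp_ℝ, exp_eq_tsum_div]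

lemma commute_smul (M : Mat) (s t : ℂ) : Commute (s • M) (t • M) :=
  ((Commute.refl M).smul_left s).smul_right t

lemma exp_smul_sub_exp_smul (M : Mat) (s t : ℂ) :
    exp (s • M) - exp (t • M) = exp (t • M) * (exp ((s - t) • M) - 1) := by
  letI : NormedAlgebra ℚ Mat := NormedAlgebra.restrictScalars ℚ ℂ Mat
  rw [mul_sub, mul_one, ← exp_add_of_commute (commute_smul M t (s - t))]
  congr 1
  rw [← add_smul]
  ring_nf

lemma exp_smul_mul_exp_neg (M : Mat) (t : ℂ) : exp (t • M) * exp ((-t) • M) = 1 := by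
  letI : NormedAlgebra ℚ Mat := NormedAlgebra.restrictScalars ℚ ℂ Mat
  rw [← exp_add_of_commute (commute_smul M t (-t)), ← add_smul, add_neg_cancel,
    zero_smul, exp_zero]

lemma norm_smul_le_half (M : Mat) (hM : ‖M‖ ≤ 1/2) (t : ℂ) {c : ℝ}
    (h : ‖t‖ ≤ c) : ‖t • M‖ ≤ c / 2 := by
  rw [norm_smul]
  have h0 : ‖t‖ = ‖t‖ := rfl
  calc ‖t‖ * ‖M‖ ≤ c * (1/2) := by
        rw [h0]
        exact mul_le_mul h hM (norm_nonneg M) ((norm_nonneg t).trans h)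
    _ = c / 2 := by ring

lemma nexp_le (M : Mat) (hM : ‖M‖ ≤ 1/2) (t : ℂ) {c : ℝ}
    (h : ‖t‖ ≤ c) : ‖exp (t • M)‖ ≤ Real.exp (c / 2) :=
  (norm_exp_le _).trans (Real.exp_le_exp.2 (norm_smul_le_half M hM t h))

lemma nexp_sub_one (M : Mat) (hM : ‖M‖ ≤ 1/2) (t : ℂ) {c : ℝ}
    (h : ‖t‖ ≤ c) : ‖exp (t • M) - 1‖ ≤ c/2 * Real.exp (c/2) := by
  refine (norm_exp_sub_one_le _).trans ?_
  exact mul_le_mul (norm_smul_le_half M hM t h)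
    (Real.exp_le_exp.2 (norm_smul_le_half M hM t h)) (Real.exp_pos _).le
    (by linarith [(norm_nonneg t).trans h])

lemma nexp_sub (M : Mat) (hM : ‖M‖ ≤ 1/2) (s t : ℂ) {c d : ℝ}
    (hst : ‖s - t‖ ≤ c) (ht : ‖t‖ ≤ d) :
    ‖exp (s • M) - exp (t • M)‖ ≤ Real.exp (d/2) * (c/2 * Real.exp (c/2)) := by
  rw [exp_smul_sub_exp_smul]
  refine (norm_mul_le _ _).trans ?_
  exact mul_le_mul (nexp_le M hM t ht) (nexp_sub_one M hM _ hst) (norm_nonneg _)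
    (Real.exp_pos _).le

lemma sq_Xm : Xmᴴ * Xm = ((1:ℂ)/4) • 1 := by
  ext i j
  fin_cases i <;> fin_cases j <;>
    simp [Xm, Matrix.mul_apply, Fin.sum_univ_two, Matrix.conjTranspose_apply,
      Matrix.one_apply, map_ofNat] <;> norm_num

lemma sq_Ym : Ymᴴ * Ym = ((1:ℂ)/4) • 1 := by
  ext i j
  fin_cases i <;> fin_cases j <;>
    simp [Ym, Matrix.mul_apply, Fin.sum_univ_two, Matrix.conjTranspose_apply,
      Matrix.one_apply, map_ofNat] <;> norm_num

lemma norm_Xm : ‖Xm‖ ≤ 1/2 := by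
  have h := Matrix.l2_opNorm_conjTranspose_mul_self Xm
  rw [sq_Xm, norm_smul, norm_one_mat] at h
  have h4 : ‖((1:ℂ)/4)‖ = 1/4 := by norm_num
  rw [h4] at h
  nlinarith [norm_nonneg Xm]

lemma norm_Ym : ‖Ym‖ ≤ 1/2 := by
  have h := Matrix.l2_opNorm_conjTranspose_mul_self Ym
  rw [sq_Ym, norm_smul, norm_one_mat] at h
  have h4 : ‖((1:ℂ)/4)‖ = 1/4 := by norm_num
  rw [h4] at h
  nlinarith [norm_nonneg Ym]

lemma exp32_le : Real.exp ((3:ℝ)/2) ≤ 7.4 := by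
  have hm : Real.exp ((3:ℝ)/2) ≤ Real.exp 2 := Real.exp_le_exp.2 (by norm_num)
  have h2 : Real.exp (2:ℝ) = Real.exp 1 * Real.exp 1 := by
    rw [← Real.exp_add]; norm_num
  nlinarith [Real.exp_one_lt_d9, Real.exp_pos 1]

lemma final_num (K r ε : ℝ) (hK : 0 < K) (hr : 0 ≤ r) (hε : 0 ≤ ε) :
    ε*r/4 * (K * Real.exp ((3:ℝ)/2)) + ε*r/2 * (K * Real.exp ((3:ℝ)/2))
      + ε*r/2 * (K * Real.exp ((3:ℝ)/2)) ≤ 12 * K * r * ε := by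
  nlinarith [exp32_le, mul_nonneg (mul_nonneg hε hr) hK.le, Real.exp_pos ((3:ℝ)/2)]

end Stmt3Aux

open Stmt3Aux NormedSpace
open scoped Matrix.Norms.L2Operator

set_option maxHeartbeats 1000000 in
theorem stmt3 (a b a' b' : ℂ) (A ε : ℝ) (hApos : 0 < A) (hεpos : 0 < ε)
    (hA : 2 * ‖a‖ * Real.exp (‖b‖ + 1) ≤ A)
    (hb : ‖b - b'‖ < ε)
    (ha : ‖a - a'‖ < ε * ‖a‖)
    (hε : ε < min (1 / Real.exp 1) (1 / A)) :
    opNorm (Yt b * Xt a * Yt (-b) - Yt b' * Xt a' * Yt (-b')) ≤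
      12 * Real.exp (A + ‖b‖) * ‖a‖ * ε := by
  set r := ‖a‖ with hrdef
  set B := ‖b‖ with hBdef
  have hr0 : 0 ≤ r := norm_nonneg a
  have hB0 : 0 ≤ B := norm_nonneg b
  have he2 : (2:ℝ) ≤ Real.exp 1 := by
    have := Real.add_one_le_exp 1
    linarith
  have hε1 : ε ≤ 1/2 := by
    have h1 : ε < 1 / Real.exp 1 := lt_of_lt_of_le hε (min_le_left _ _)
    have h2 : 1 / Real.exp 1 ≤ 1/2 := by
      rw [div_le_div_iff₀ (Real.exp_pos 1) (by norm_num)]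
      linarith
    linarith
  have hexpB : (2:ℝ) ≤ Real.exp (B + 1) :=
    le_trans he2 (Real.exp_le_exp.2 (by linarith))
  have hra : 4 * r ≤ A := by
    calc 4 * r = 2 * r * 2 := by ring
      _ ≤ 2 * r * Real.exp (B + 1) := by
          exact mul_le_mul_of_nonneg_left hexpB (by linarith)
      _ ≤ A := hA
  have hrA : r ≤ A := by linarith
  have hεr : ε * r ≤ r := by nlinarith
  have hb' : ‖b'‖ ≤ B + 1 := by
    have h1 : ‖b'‖ ≤ B + ‖b - b'‖ := by
      calc ‖b'‖ = ‖b + -(b - b')‖ := by congr 1; ring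
        _ ≤ B + ‖-(b - b')‖ := norm_add_le b _
        _ = B + ‖b - b'‖ := by rw [norm_neg]
    linarith
  have ha2 : ‖a'‖ ≤ 2 * r := by
    have h1 : ‖a'‖ ≤ r + ‖a - a'‖ := by
      calc ‖a'‖ = ‖a + -(a - a')‖ := by congr 1; ring
        _ ≤ r + ‖-(a - a')‖ := norm_add_le a _
        _ = r + ‖a - a'‖ := by rw [norm_neg]
    nlinarith
  have haa : ‖a - a'‖ ≤ ε * r := ha.le
  have hnb : ‖-b‖ ≤ B := by rw [norm_neg]
  have hnb' : ‖-b'‖ ≤ B + 1 := by rw [norm_neg]; exact hb'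
  have hnbb' : ‖(-b) - (-b')‖ ≤ ε := by
    have h : (-b) - (-b') = -(b - b') := by ring
    rw [h, norm_neg]; exact hb.le
  -- algebraic identity
  have key : Yt b * Xt a * Yt (-b) - Yt b' * Xt a' * Yt (-b') =
      (Yt b - Yt b') * (Xt a - 1) * Yt (-b) + Yt b' * (Xt a - Xt a') * Yt (-b)
        + Yt b' * (Xt a' - 1) * (Yt (-b) - Yt (-b')) := by
    have e1 : Yt b * Yt (-b) = 1 := exp_smul_mul_exp_neg Ym b
    have e2 : Yt b' * Yt (-b') = 1 := exp_smul_mul_exp_neg Ym b'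
    have expand : (Yt b - Yt b') * (Xt a - 1) * Yt (-b) + Yt b' * (Xt a - Xt a') * Yt (-b)
        + Yt b' * (Xt a' - 1) * (Yt (-b) - Yt (-b'))
        = Yt b * Xt a * Yt (-b) - Yt b' * Xt a' * Yt (-b')
          - Yt b * Yt (-b) + Yt b' * Yt (-b') := by
      noncomm_ring
    rw [expand, e1, e2]
    abel
  have hop : opNorm (Yt b * Xt a * Yt (-b) - Yt b' * Xt a' * Yt (-b'))
      = ‖Yt b * Xt a * Yt (-b) - Yt b' * Xt a' * Yt (-b')‖ :=
    (Matrix.cstar_norm_def _).symm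
  rw [hop, key]
  -- three term bounds
  have h1 : ‖(Yt b - Yt b') * (Xt a - 1) * Yt (-b)‖ ≤
      (Real.exp ((B+1)/2) * (ε/2 * Real.exp (ε/2))) * (r/2 * Real.exp (r/2)) * Real.exp (B/2) := by
    refine (norm_mul_le _ _).trans ?_
    refine mul_le_mul ((norm_mul_le _ _).trans ?_) (nexp_le Ym norm_Ym (-b) hnb)
      (norm_nonneg _) (by positivity)
    exact mul_le_mul (nexp_sub Ym norm_Ym b b' hb.le hb')
      (nexp_sub_one Xm norm_Xm a (le_refl r)) (norm_nonneg _) (by positivity)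
  have h2 : ‖Yt b' * (Xt a - Xt a') * Yt (-b)‖ ≤
      Real.exp ((B+1)/2) * (Real.exp ((2*r)/2) * ((ε*r)/2 * Real.exp ((ε*r)/2))) * Real.exp (B/2) := by
    refine (norm_mul_le _ _).trans ?_
    refine mul_le_mul ((norm_mul_le _ _).trans ?_) (nexp_le Ym norm_Ym (-b) hnb)
      (norm_nonneg _) (by positivity)
    exact mul_le_mul (nexp_le Ym norm_Ym b' hb')
      (nexp_sub Xm norm_Xm a a' haa ha2) (norm_nonneg _) (by positivity)
  have h3 : ‖Yt b' * (Xt a' - 1) * (Yt (-b) - Yt (-b'))‖ ≤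
      Real.exp ((B+1)/2) * ((2*r)/2 * Real.exp ((2*r)/2))
        * (Real.exp ((B+1)/2) * (ε/2 * Real.exp (ε/2))) := by
    refine (norm_mul_le _ _).trans ?_
    refine mul_le_mul ((norm_mul_le _ _).trans ?_)
      (nexp_sub Ym norm_Ym (-b) (-b') hnbb' hnb') (norm_nonneg _) (by positivity)
    exact mul_le_mul (nexp_le Ym norm_Ym b' hb')
      (nexp_sub_one Xm norm_Xm a' ha2) (norm_nonneg _) (by positivity)
  have hεr0 : 0 ≤ ε * r := mul_nonneg hεpos.le hr0
  -- single-exponential forms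
  have e1 : (Real.exp ((B+1)/2) * (ε/2 * Real.exp (ε/2))) * (r/2 * Real.exp (r/2)) * Real.exp (B/2)
      = ε*r/4 * Real.exp ((B+1)/2 + (ε/2 + (r/2 + B/2))) := by
    rw [Real.exp_add, Real.exp_add, Real.exp_add]; ring
  have e2 : Real.exp ((B+1)/2) * (Real.exp ((2*r)/2) * ((ε*r)/2 * Real.exp ((ε*r)/2))) * Real.exp (B/2)
      = ε*r/2 * Real.exp ((B+1)/2 + ((2*r)/2 + ((ε*r)/2 + B/2))) := by
    rw [Real.exp_add, Real.exp_add, Real.exp_add]; ring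
  have e3 : Real.exp ((B+1)/2) * ((2*r)/2 * Real.exp ((2*r)/2))
        * (Real.exp ((B+1)/2) * (ε/2 * Real.exp (ε/2)))
      = ε*r/2 * Real.exp ((B+1)/2 + ((2*r)/2 + ((B+1)/2 + ε/2))) := by
    rw [Real.exp_add, Real.exp_add, Real.exp_add]; ring
  have hc : (0:ℝ) ≤ ε*r/4 := by linarith
  have b1 : ε*r/4 * Real.exp ((B+1)/2 + (ε/2 + (r/2 + B/2)))
      ≤ ε*r/4 * Real.exp (A + B + 3/2) :=
    mul_le_mul_of_nonneg_left (Real.exp_le_exp.2 (by linarith)) (by linarith)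
  have b2 : ε*r/2 * Real.exp ((B+1)/2 + ((2*r)/2 + ((ε*r)/2 + B/2)))
      ≤ ε*r/2 * Real.exp (A + B + 3/2) :=
    mul_le_mul_of_nonneg_left (Real.exp_le_exp.2 (by linarith)) (by linarith)
  have b3 : ε*r/2 * Real.exp ((B+1)/2 + ((2*r)/2 + ((B+1)/2 + ε/2)))
      ≤ ε*r/2 * Real.exp (A + B + 3/2) :=
    mul_le_mul_of_nonneg_left (Real.exp_le_exp.2 (by linarith)) (by linarith)
  have hEA : Real.exp (A + B + 3/2) = Real.exp (A + B) * Real.exp ((3:ℝ)/2) := by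
    rw [← Real.exp_add]
  calc ‖(Yt b - Yt b') * (Xt a - 1) * Yt (-b) + Yt b' * (Xt a - Xt a') * Yt (-b)
        + Yt b' * (Xt a' - 1) * (Yt (-b) - Yt (-b'))‖
      ≤ ‖(Yt b - Yt b') * (Xt a - 1) * Yt (-b)‖ + ‖Yt b' * (Xt a - Xt a') * Yt (-b)‖
        + ‖Yt b' * (Xt a' - 1) * (Yt (-b) - Yt (-b'))‖ := norm_add₃_le
    _ ≤ ε*r/4 * Real.exp (A + B + 3/2) + ε*r/2 * Real.exp (A + B + 3/2)
        + ε*r/2 * Real.exp (A + B + 3/2) := by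
        refine add_le_add (add_le_add ?_ ?_) ?_
        · exact le_trans h1 (le_trans (le_of_eq e1) b1)
        · exact le_trans h2 (le_trans (le_of_eq e2) b2)
        · exact le_trans h3 (le_trans (le_of_eq e3) b3)
    _ ≤ 12 * Real.exp (A + B) * r * ε := by
        rw [hEA]
        exact final_num _ _ _ (Real.exp_pos _) hr0 hεpos.le

end
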